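/- Let (λ_j)_{j≥1} be a nondecreasing sequence of nonnegative reals, let k ≥ 1, and let ω_1 ≥ ω_2 ≥ ⋯ ≥ ω_k > 0. Let c_1, …, c_k be elements of ℓ²(ℕ_{≥1}) that are orthonormal, i.e. Σ_{j≥1} c_{i,j} c_{i',j} = δ_{i i'} for 1 ≤ i ≤ i' ≤ k, and assume Σ_{j≥1} λ_j c_{i,j}² < ∞ for each i. Then Σ_{i=1}^k ω_i Σ_{j≥1} λ_j c_{i,j}² ≥ Σ_{i=1}^k ω_i λ_i. -/

import Mathlib

open Finset
open scoped ENNReal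

private lemma telescope_aux (g : ℕ → ℝ) :
    ∀ k i, i ≤ k → ∑ m ∈ Finset.Icc i k, (g m - g (m+1)) = g i - g (k+1) := by
  intro k
  induction k with
  | zero => intro i h; interval_cases i; simp
  | succ n ih =>
    intro i h
    rcases Nat.lt_or_ge i (n+1) with h' | h'
    · rw [Finset.sum_Icc_succ_top (by omega), ih i (by omega)]; ring
    · have : i = n+1 := le_antisymm h h'
      subst this; simp

private lemma abel_aux (a w : ℕ → ℝ) (k : ℕ) :
    ∑ i ∈ Finset.Icc 1 k, w i * a i
      = ∑ m ∈ Finset.Icc 1 k,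
          ((if m ≤ k then w m else 0) - (if m + 1 ≤ k then w (m+1) else 0))
            * ∑ i ∈ Finset.Icc 1 m, a i := by
  set w' : ℕ → ℝ := fun m => if m ≤ k then w m else 0 with hw'
  symm
  calc ∑ m ∈ Finset.Icc 1 k, (w' m - w' (m+1)) * ∑ i ∈ Finset.Icc 1 m, a i
      = ∑ m ∈ Finset.Icc 1 k, ∑ i ∈ Finset.Icc 1 m, (w' m - w' (m+1)) * a i := by
        simp [Finset.mul_sum]
    _ = ∑ i ∈ Finset.Icc 1 k, ∑ m ∈ Finset.Icc i k, (w' m - w' (m+1)) * a i := by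
        refine Finset.sum_comm' ?_
        intro x y; simp [Finset.mem_Icc]; omega
    _ = ∑ i ∈ Finset.Icc 1 k, w i * a i := by
        refine Finset.sum_congr rfl fun i hi => ?_
        simp only [Finset.mem_Icc] at hi
        rw [← Finset.sum_mul, telescope_aux w' k i hi.2]
        have h1 : w' i = w i := by simp [hw', hi.2]
        have h2 : w' (k+1) = 0 := by simp [hw']
        rw [h1, h2, sub_zero]


/-- The core coefficient-level inequality underlying the variational
characterisations: for a nonnegative nondecreasing sequence `(λⱼ)ⱼ≥1`, weights
`ω₁ ≥ ⋯ ≥ ω_k > 0`, and orthonormal `c₁, …, c_k ∈ ℓ²(ℕ≥1)` with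
`∑ⱼ≥1 λⱼ cᵢⱼ² < ∞`, one has `∑ᵢ ωᵢ ∑ⱼ≥1 λⱼ cᵢⱼ² ≥ ∑ᵢ ωᵢ λᵢ`. -/
theorem coefficient_level_inequality
    (lam : ℕ → ℝ)
    (hlam_nonneg : ∀ j, 1 ≤ j → 0 ≤ lam j)
    (hlam_mono : ∀ i j, 1 ≤ i → i ≤ j → lam i ≤ lam j)
    (k : ℕ) (hk : 1 ≤ k)
    (ω : ℕ → ℝ)
    (hω_mono : ∀ i j, 1 ≤ i → i ≤ j → j ≤ k → ω j ≤ ω i)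
    (hω_pos : ∀ i, 1 ≤ i → i ≤ k → 0 < ω i)
    (c : ℕ → ℕ → ℝ)
    (h_orth : ∀ i i', 1 ≤ i → i ≤ i' → i' ≤ k →
      HasSum (fun j : {j : ℕ // 1 ≤ j} => c i j.1 * c i' j.1)
        (if i = i' then 1 else 0))
    (h_summable : ∀ i, 1 ≤ i → i ≤ k →
      Summable (fun j : {j : ℕ // 1 ≤ j} => lam j.1 * c i j.1 ^ 2)) :
    ∑ i ∈ Finset.Icc 1 k, ω i * lam i
      ≤ ∑ i ∈ Finset.Icc 1 k,
          ω i * ∑' j : {j : ℕ // 1 ≤ j}, lam j.1 * c i j.1 ^ 2 := by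
  classical
  -- symmetric orthonormality
  have h_orth' : ∀ i i', 1 ≤ i → i ≤ k → 1 ≤ i' → i' ≤ k →
      HasSum (fun j : {j : ℕ // 1 ≤ j} => c i j.1 * c i' j.1) (if i = i' then 1 else 0) := by
    intro i i' hi hik hi' hi'k
    rcases le_or_gt i i' with h | h
    · exact h_orth i i' hi h hi'k
    · have h0 := h_orth i' i hi' h.le hik
      have hne : i ≠ i' := by omega
      have hne' : i' ≠ i := by omega
      rw [if_neg hne'] at h0
      rw [if_neg hne]
      simpa [mul_comm] using h0
  -- membership in ℓ²
  have hmem : ∀ i, 1 ≤ i → i ≤ k →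
      Memℓp (fun j : {j : ℕ // 1 ≤ j} => c i j.1) 2 := by
    intro i hi hik
    apply memℓp_gen
    have h1 := (h_orth' i i hi hik hi hik).summable
    have he : ((2 : ℝ≥0∞)).toReal = ((2:ℕ) : ℝ) := by norm_num
    refine h1.congr fun j => ?_
    rw [he, Real.rpow_natCast]
    simp [sq, abs_mul_abs_self]
  set v : {i : ℕ // 1 ≤ i ∧ i ≤ k} → lp (fun _ : {j : ℕ // 1 ≤ j} => ℝ) 2 :=
    fun i => ⟨fun j => c i.1 j.1, hmem i.1 i.2.1 i.2.2⟩ with hv_def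
  have hv : Orthonormal ℝ v := by
    rw [orthonormal_iff_ite]
    intro p q
    have hs := lp.hasSum_inner (𝕜 := ℝ) (v p) (v q)
    have hs' : HasSum (fun j : {j : ℕ // 1 ≤ j} => c p.1 j.1 * c q.1 j.1) (inner ℝ (v p) (v q) : ℝ) := by
      refine hs.congr_fun fun j => ?_
      simp [hv_def, RCLike.inner_apply, starRingEnd_apply, star_trivial, mul_comm]
    have := hs'.unique (h_orth' p.1 q.1 p.2.1 p.2.2 q.2.1 q.2.2)
    rw [this]
    by_cases h : p = q
    · simp [h]
    · have : p.1 ≠ q.1 := fun hh => h (Subtype.ext hh)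
      simp [h, this]
  -- Bessel
  have bessel : ∀ (m : ℕ), m ≤ k → ∀ j : {j : ℕ // 1 ≤ j},
      ∑ i ∈ Finset.Icc 1 m, (c i j.1)^2 ≤ 1 := by
    intro m hmk j
    have hx : ‖lp.single (E := fun _ : {j : ℕ // 1 ≤ j} => ℝ) 2 j (1:ℝ)‖ = 1 := by
      have := lp.norm_single (E := fun _ : {j : ℕ // 1 ≤ j} => ℝ) (p := 2) (by norm_num)
        j (1:ℝ)
      simpa using this
    have hb := hv.sum_inner_products_le (lp.single 2 j (1:ℝ))
      (s := (Finset.Icc 1 m).subtype (fun i => 1 ≤ i ∧ i ≤ k))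
    rw [hx] at hb
    have heq : ∑ i ∈ (Finset.Icc 1 m).subtype (fun i => 1 ≤ i ∧ i ≤ k),
        ‖(inner ℝ (v i) (lp.single 2 j (1:ℝ)) : ℝ)‖ ^ 2
        = ∑ i ∈ Finset.Icc 1 m, (c i j.1)^2 := by
      rw [show (∑ i ∈ Finset.Icc 1 m, (c i j.1)^2)
          = ∑ i ∈ (Finset.Icc 1 m).subtype (fun i => 1 ≤ i ∧ i ≤ k), (c i.1 j.1)^2 from
        (Finset.sum_subtype_of_mem _ (fun x hx => by
          simp only [Finset.mem_Icc] at hx; exact ⟨hx.1, hx.2.trans hmk⟩)).symm]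
      refine Finset.sum_congr rfl fun i _ => ?_
      rw [lp.inner_single_right]
      simp [hv_def, RCLike.inner_apply, starRingEnd_apply, star_trivial, sq_abs]
    rw [heq] at hb
    simpa using hb
  -- key unweighted inequality
  have lemB : ∀ m, 1 ≤ m → m ≤ k →
      ∑ i ∈ Finset.Icc 1 m, lam i
        ≤ ∑ i ∈ Finset.Icc 1 m, ∑' (j : {j : ℕ // 1 ≤ j}), lam j.1 * c i j.1 ^ 2 := by
    intro m hm1 hmk
    set t : {j : ℕ // 1 ≤ j} → ℝ := fun j => ∑ i ∈ Finset.Icc 1 m, (c i j.1)^2 with ht_def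
    have ht_nonneg : ∀ j, 0 ≤ t j := fun j => Finset.sum_nonneg fun i _ => sq_nonneg _
    have ht_le : ∀ j, t j ≤ 1 := fun j => bessel m hmk j
    have ht_sum : HasSum t (m : ℝ) := by
      have h0 : HasSum t (∑ i ∈ Finset.Icc 1 m, (1:ℝ)) := by
        refine hasSum_sum fun i hi => ?_
        simp only [Finset.mem_Icc] at hi
        have := h_orth' i i hi.1 (hi.2.trans hmk) hi.1 (hi.2.trans hmk)
        rw [if_pos rfl] at this
        exact this.congr_fun fun j => (sq (c i j.1)).symm ▸ (by ring)
      simpa using h0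
    have hsum_lt : Summable (fun j : {j : ℕ // 1 ≤ j} => lam j.1 * t j) := by
      have : Summable (fun j : {j : ℕ // 1 ≤ j} => ∑ i ∈ Finset.Icc 1 m, lam j.1 * c i j.1 ^ 2) :=
        summable_sum fun i hi => by
          simp only [Finset.mem_Icc] at hi
          exact h_summable i hi.1 (hi.2.trans hmk)
      refine this.congr fun j => ?_
      simp [ht_def, Finset.mul_sum]
    have hRHS : ∑ i ∈ Finset.Icc 1 m, ∑' (j : {j : ℕ // 1 ≤ j}), lam j.1 * c i j.1 ^ 2
        = ∑' (j : {j : ℕ // 1 ≤ j}), lam j.1 * t j := by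
      rw [← Summable.tsum_finsetSum (fun i hi => by
        simp only [Finset.mem_Icc] at hi
        exact h_summable i hi.1 (hi.2.trans hmk))]
      refine tsum_congr fun j => ?_
      simp [ht_def, Finset.mul_sum]
    set F : Finset {j : ℕ // 1 ≤ j} := (Finset.Icc 1 m).subtype (fun j => 1 ≤ j) with hF_def
    have hmemF : ∀ j : {j : ℕ // 1 ≤ j}, j ∈ F ↔ j.1 ≤ m := by
      intro j
      simp only [hF_def, Finset.mem_subtype, Finset.mem_Icc]
      exact ⟨fun h => h.2, fun h => ⟨j.2, h⟩⟩
    have hsplit := hsum_lt.sum_add_tsum_subtype_compl F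
    have hsplit_t := ht_sum.summable.sum_add_tsum_subtype_compl F
    rw [ht_sum.tsum_eq] at hsplit_t
    -- bound the tail
    have htail : lam m * ((m : ℝ) - ∑ j ∈ F, t j) ≤ ∑' j : {j : {j : ℕ // 1 ≤ j} // j ∉ F}, lam j.1.1 * t j.1 := by
      have h1 : ∑' j : {j : {j : ℕ // 1 ≤ j} // j ∉ F}, lam m * t j.1
          = lam m * ((m : ℝ) - ∑ j ∈ F, t j) := by
        rw [tsum_mul_left]
        congr 1
        linarith [hsplit_t]
      rw [← h1]
      refine Summable.tsum_le_tsum (fun j => ?_) ?_ ?_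
      · have hj : m < j.1.1 := by
          by_contra h
          exact j.2 ((hmemF j.1).2 (by omega))
        exact mul_le_mul_of_nonneg_right (hlam_mono m j.1.1 hm1 hj.le) (ht_nonneg j.1)
      · exact (ht_sum.summable.mul_left (lam m)).subtype {j | j ∉ F}
      · exact hsum_lt.subtype {j | j ∉ F}
    -- cardinality of F
    have hFsub : ∀ x ∈ Finset.Icc 1 m, 1 ≤ x := fun x hx => (Finset.mem_Icc.mp hx).1
    have hcard : ∑ j ∈ F, (1:ℝ) = (m : ℝ) := by
      rw [hF_def, Finset.sum_subtype_of_mem (fun _ => (1:ℝ)) hFsub]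
      simp
    -- put everything together
    rw [hRHS, ← hsplit]
    have hstep : ∑ i ∈ Finset.Icc 1 m, lam i
        ≤ ∑ j ∈ F, lam j.1 * t j + lam m * ((m : ℝ) - ∑ j ∈ F, t j) := by
      have hexp : ∑ j ∈ F, lam j.1 * t j + lam m * ((m : ℝ) - ∑ j ∈ F, t j)
          = ∑ j ∈ F, (lam j.1 * t j + lam m * (1 - t j)) := by
        rw [← hcard, ← Finset.sum_sub_distrib, Finset.mul_sum, ← Finset.sum_add_distrib]
      rw [hexp, show ∑ i ∈ Finset.Icc 1 m, lam i = ∑ j ∈ F, lam j.1 from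
        (Finset.sum_subtype_of_mem lam hFsub).symm]
      refine Finset.sum_le_sum fun j hj => ?_
      have hjm : j.1 ≤ m := (hmemF j).1 hj
      have h1 : lam j.1 ≤ lam m := hlam_mono j.1 m j.2 hjm
      have h2 : t j ≤ 1 := ht_le j
      nlinarith [ht_nonneg j]
    linarith [htail]
  -- Abel summation
  rw [abel_aux lam ω k,
    abel_aux (fun i => ∑' (j : {j : ℕ // 1 ≤ j}), lam j.1 * c i j.1 ^ 2) ω k]
  refine Finset.sum_le_sum fun m hm => ?_
  simp only [Finset.mem_Icc] at hm
  have hd : 0 ≤ (if m ≤ k then ω m else 0) - (if m + 1 ≤ k then ω (m+1) else 0) := by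
    rw [if_pos hm.2]
    by_cases h : m + 1 ≤ k
    · rw [if_pos h]
      have := hω_mono m (m+1) hm.1 (by omega) h
      linarith
    · rw [if_neg h]
      linarith [hω_pos m hm.1 hm.2]
  exact mul_le_mul_of_nonneg_left (lemB m hm.1 hm.2) hd
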